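/- arXiv:math/0604640 — 2 statements merged into one kernel-verified Lean document; each statement's English description precedes it below -/
import Mathlib

section
/- Let x, K > 0, r ≥ 0, T > 0, m ∈ ℝ. Then H(x, m, σ²) := x e^{m+σ²/2} Φ((log(x/K)+rT+m+σ²)/σ) - K e^{-rT} Φ((log(x/K)+rT+m)/σ) converges to (x e^m - K e^{-rT})⁺ as σ → 0⁺. -/
open MeasureTheory ProbabilityTheory Filter Real Set

noncomputable section

/-- The standard normal cumulative distribution function `Φ`. -/
def stdNormalCDF (x : ℝ) : ℝ :=
  (Real.sqrt (2 * Real.pi))⁻¹ * ∫ u in Set.Iic x, Real.exp (-u ^ 2 / 2)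

variable {Ω : Type*}

/-- `W` is a standard Brownian motion with respect to the filtration `ℱ` under the measure `μ`:
it starts at `0`, has a.s. continuous paths, is adapted, has Gaussian increments
`W t - W s ∼ N(0, t - s)`, and its increments after time `s` are independent of `ℱ s`. -/
def IsBrownianMotion [m0 : MeasurableSpace Ω] (μ : Measure Ω) (ℱ : Filtration ℝ m0)
    (W : ℝ → Ω → ℝ) : Prop :=
  (∀ᵐ ω ∂μ, W 0 ω = 0) ∧
  (∀ᵐ ω ∂μ, Continuous fun t => W t ω) ∧
  (∀ t : ℝ, Measurable[ℱ t] (W t)) ∧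
  (∀ s t : ℝ, 0 ≤ s → s ≤ t →
    Measure.map (fun ω => W t ω - W s ω) μ = gaussianReal 0 (Real.toNNReal (t - s))) ∧
  (∀ s t : ℝ, 0 ≤ s → s ≤ t →
    ProbabilityTheory.Indep
      (MeasurableSpace.comap (fun ω => W t ω - W s ω) inferInstance) (ℱ s) μ)

/-- Left-point dyadic Riemann sum approximating the Itô integral `∫₀ᵗ H dW`. -/
def itoSum (W H : ℝ → Ω → ℝ) (t : ℝ) (n : ℕ) (ω : Ω) : ℝ :=
  ∑ i ∈ Finset.range (2 ^ n),
    H (t * i / 2 ^ n) ω * (W (t * (i + 1) / 2 ^ n) ω - W (t * i / 2 ^ n) ω)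

/-- `I` is (a version of) the Itô integral process `t ↦ ∫₀ᵗ H dW` under the measure `μ`:
for every `t ≥ 0` the left-point dyadic Riemann sums converge in probability to `I t`. -/
def IsItoIntegral [MeasurableSpace Ω] (μ : Measure Ω) (W H I : ℝ → Ω → ℝ) : Prop :=
  ∀ t : ℝ, 0 ≤ t → TendstoInMeasure μ (fun n => itoSum W H t n) atTop (I t)

lemma gauss_eq : ∀ u : ℝ, Real.exp (-u ^ 2 / 2) = Real.exp (-(1/2 : ℝ) * u ^ 2) := by
  intro u; congr 1; ring

lemma gauss_integrable : Integrable (fun u : ℝ => Real.exp (-u ^ 2 / 2)) := by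
  simpa only [gauss_eq] using integrable_exp_neg_mul_sq (b := (1:ℝ)/2) (by norm_num)

lemma gauss_total : ∫ u : ℝ, Real.exp (-u ^ 2 / 2) = Real.sqrt (2 * Real.pi) := by
  simp only [gauss_eq]
  rw [integral_gaussian]
  norm_num [mul_comm]

lemma sqrt_two_pi_pos : 0 < Real.sqrt (2 * Real.pi) :=
  Real.sqrt_pos.mpr (by positivity)

lemma stdNormalCDF_tendsto_atTop : Tendsto stdNormalCDF atTop (nhds 1) := by
  have h := (aecover_Iic (μ := (volume : Measure ℝ)) (b := fun y : ℝ => y)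
      tendsto_id).integral_tendsto_of_countably_generated gauss_integrable
  rw [gauss_total] at h
  have h2 := h.const_mul (Real.sqrt (2 * Real.pi))⁻¹
  rw [inv_mul_cancel₀ sqrt_two_pi_pos.ne'] at h2
  exact h2

lemma stdNormalCDF_tendsto_atBot : Tendsto stdNormalCDF atBot (nhds 0) := by
  have h0 : ∀ y : ℝ, 0 ≤ stdNormalCDF y := by
    intro y
    apply mul_nonneg (by positivity)
    exact setIntegral_nonneg measurableSet_Iic (fun u _ => (Real.exp_pos _).le)
  have hle : ∀ᶠ y in atBot, stdNormalCDF y ≤ (Real.sqrt (2 * Real.pi))⁻¹ * Real.exp y := by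
    filter_upwards [eventually_le_atBot (-2 : ℝ)] with y hy
    have hint : ∫ u in Set.Iic y, Real.exp (-u ^ 2 / 2) ≤ ∫ u in Set.Iic y, Real.exp u := by
      apply setIntegral_mono_on gauss_integrable.integrableOn (integrableOn_exp_Iic y)
        measurableSet_Iic
      intro u hu
      apply Real.exp_le_exp.mpr
      have : u ≤ -2 := le_trans hu hy
      nlinarith
    rw [integral_exp_Iic] at hint
    exact mul_le_mul_of_nonneg_left hint (by positivity)
  have hlim : Tendsto (fun y : ℝ => (Real.sqrt (2 * Real.pi))⁻¹ * Real.exp y) atBot (nhds 0) := by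
    simpa using (Real.tendsto_exp_atBot).const_mul (Real.sqrt (2 * Real.pi))⁻¹
  exact tendsto_of_tendsto_of_tendsto_of_le_of_le' tendsto_const_nhds hlim
    (Eventually.of_forall h0) hle

lemma stdNormalCDF_zero : stdNormalCDF 0 = 1 / 2 := by
  have hIic : ∫ u in Set.Iic (0:ℝ), Real.exp (-u ^ 2 / 2)
      = ∫ u in Set.Ioi (0:ℝ), Real.exp (-u ^ 2 / 2) := by
    rw [← neg_zero, ← integral_comp_neg_Iic, neg_zero]
    congr 1 with u
    ring_nf
  have hIoi : ∫ u in Set.Ioi (0:ℝ), Real.exp (-u ^ 2 / 2) = Real.sqrt (2 * Real.pi) / 2 := by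
    simp only [gauss_eq]
    rw [integral_gaussian_Ioi]
    norm_num [mul_comm]
  rw [stdNormalCDF, hIic, hIoi]
  field_simp

lemma stdNormalCDF_tendsto_zero : Tendsto stdNormalCDF (nhds 0) (nhds (1/2)) := by
  rw [← stdNormalCDF_zero]
  have key : ∀ y : ℝ, ‖stdNormalCDF y - stdNormalCDF 0‖ ≤ (Real.sqrt (2 * Real.pi))⁻¹ * |y| := by
    intro y
    have hsub : stdNormalCDF y - stdNormalCDF 0
        = (Real.sqrt (2 * Real.pi))⁻¹ * ∫ u in (0:ℝ)..y, Real.exp (-u ^ 2 / 2) := by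
      rw [stdNormalCDF, stdNormalCDF, ← mul_sub,
        intervalIntegral.integral_Iic_sub_Iic gauss_integrable.integrableOn
          gauss_integrable.integrableOn]
    rw [hsub, Real.norm_eq_abs, abs_mul, abs_of_nonneg (by positivity : (0:ℝ) ≤ (Real.sqrt (2 * Real.pi))⁻¹)]
    apply mul_le_mul_of_nonneg_left _ (by positivity)
    have h := intervalIntegral.norm_integral_le_of_norm_le_const (a := (0:ℝ)) (b := y) (C := 1)
      (f := fun u : ℝ => Real.exp (-u ^ 2 / 2)) ?_
    · simpa using h
    · intro u _
      rw [Real.norm_eq_abs, abs_of_pos (Real.exp_pos _), ← Real.exp_zero]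
      exact Real.exp_le_exp.mpr (by nlinarith [sq_nonneg u])
  have hlim : Tendsto (fun y : ℝ => (Real.sqrt (2 * Real.pi))⁻¹ * |y|) (nhds 0) (nhds 0) := by
    have : Continuous (fun y : ℝ => (Real.sqrt (2 * Real.pi))⁻¹ * |y|) := by continuity
    simpa using this.tendsto 0
  have hdiff : Tendsto (fun y : ℝ => stdNormalCDF y - stdNormalCDF 0) (nhds 0) (nhds 0) :=
    squeeze_zero_norm key hlim
  simpa using hdiff.add (tendsto_const_nhds (x := stdNormalCDF 0))

/-- `H(x, m, σ²) → (x e^m - K e^{-rT})⁺` as `σ → 0⁺`. -/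
theorem H_tendsto_intrinsic_value
    (x K r T m : ℝ) (hx : 0 < x) (hK : 0 < K) (hr : 0 ≤ r) (hT : 0 < T) :
    Tendsto (fun σ : ℝ =>
        x * Real.exp (m + σ ^ 2 / 2)
            * stdNormalCDF ((Real.log (x / K) + r * T + m + σ ^ 2) / σ)
          - K * Real.exp (-(r * T))
            * stdNormalCDF ((Real.log (x / K) + r * T + m) / σ))
      (nhdsWithin 0 (Set.Ioi 0))
      (nhds (max (x * Real.exp m - K * Real.exp (-(r * T))) 0)) := by
  set d : ℝ := Real.log (x / K) + r * T + m with hd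
  set A : ℝ := x * Real.exp m with hA
  set B : ℝ := K * Real.exp (-(r * T)) with hB
  have hApos : 0 < A := by positivity
  have hBpos : 0 < B := by positivity
  have hdlog : d = Real.log A - Real.log B := by
    rw [hd, hA, hB, Real.log_mul hx.ne' (Real.exp_pos _).ne',
      Real.log_mul hK.ne' (Real.exp_pos _).ne', Real.log_exp, Real.log_exp,
      Real.log_div hx.ne' hK.ne']
    ring
  have hmem : ∀ᶠ σ : ℝ in nhdsWithin 0 (Set.Ioi 0), (0:ℝ) < σ :=
    eventually_mem_nhdsWithin
  have hσ0 : Tendsto (fun σ : ℝ => σ) (nhdsWithin 0 (Set.Ioi 0)) (nhds 0) :=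
    tendsto_id.mono_left nhdsWithin_le_nhds
  have hinv : Tendsto (fun σ : ℝ => σ⁻¹) (nhdsWithin 0 (Set.Ioi 0)) atTop :=
    tendsto_inv_nhdsGT_zero
  have hAfac : Tendsto (fun σ : ℝ => x * Real.exp (m + σ ^ 2 / 2))
      (nhdsWithin 0 (Set.Ioi 0)) (nhds A) := by
    have hc : Continuous (fun σ : ℝ => x * Real.exp (m + σ ^ 2 / 2)) := by continuity
    have := (hc.tendsto 0).mono_left (nhdsWithin_le_nhds (s := Set.Ioi 0))
    simpa [hA] using this
  rcases lt_trichotomy d 0 with hdneg | hdzero | hdpos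
  · -- d < 0 : both Φ terms → 0, limit 0
    have hAB : A < B := by
      have := sub_neg.mp (hdlog ▸ hdneg)
      exact (Real.log_lt_log_iff hApos hBpos).mp this
    have harg2 : Tendsto (fun σ : ℝ => d / σ) (nhdsWithin 0 (Set.Ioi 0)) atBot := by
      simpa [div_eq_mul_inv] using hinv.const_mul_atTop_of_neg hdneg
    have harg1 : Tendsto (fun σ : ℝ => (d + σ ^ 2) / σ) (nhdsWithin 0 (Set.Ioi 0)) atBot := by
      apply Tendsto.congr' _ (harg2.atBot_add hσ0)
      filter_upwards [hmem] with σ hσ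
      field_simp
    have hΦ1 := stdNormalCDF_tendsto_atBot.comp harg1
    have hΦ2 := stdNormalCDF_tendsto_atBot.comp harg2
    have hfinal := (hAfac.mul hΦ1).sub ((tendsto_const_nhds (x := B)).mul hΦ2)
    rw [max_eq_right (sub_nonpos.mpr hAB.le)]
    simpa using hfinal
  · -- d = 0 : A = B, limit 0
    have hAB : A = B := by
      have : Real.log A = Real.log B := by rw [hdlog] at hdzero; linarith
      exact Real.log_injOn_pos.eq_iff (Set.mem_Ioi.mpr hApos) (Set.mem_Ioi.mpr hBpos) |>.mp this
    have harg1 : Tendsto (fun σ : ℝ => (d + σ ^ 2) / σ) (nhdsWithin 0 (Set.Ioi 0)) (nhds 0) := by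
      apply Tendsto.congr' _ hσ0
      filter_upwards [hmem] with σ hσ
      rw [hdzero]
      field_simp
      ring
    have hΦ1 : Tendsto (fun σ : ℝ => stdNormalCDF ((d + σ ^ 2) / σ))
        (nhdsWithin 0 (Set.Ioi 0)) (nhds (1/2)) := stdNormalCDF_tendsto_zero.comp harg1
    have hΦ2 : Tendsto (fun σ : ℝ => stdNormalCDF (d / σ))
        (nhdsWithin 0 (Set.Ioi 0)) (nhds (1/2)) := by
      simp only [hdzero, zero_div]
      rw [← stdNormalCDF_zero]
      exact tendsto_const_nhds
    have hfinal := (hAfac.mul hΦ1).sub ((tendsto_const_nhds (x := B)).mul hΦ2)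
    have : A * (1/2) - B * (1/2) = 0 := by rw [hAB]; ring
    rw [this] at hfinal
    rw [max_eq_right (sub_nonpos.mpr hAB.le)]
    exact hfinal
  · -- d > 0 : both Φ terms → 1
    have hAB : B < A := by
      have := sub_pos.mp (hdlog ▸ hdpos)
      exact (Real.log_lt_log_iff hBpos hApos).mp this
    have harg2 : Tendsto (fun σ : ℝ => d / σ) (nhdsWithin 0 (Set.Ioi 0)) atTop := by
      simpa [div_eq_mul_inv] using hinv.const_mul_atTop hdpos
    have harg1 : Tendsto (fun σ : ℝ => (d + σ ^ 2) / σ) (nhdsWithin 0 (Set.Ioi 0)) atTop := by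
      apply Tendsto.congr' _ (harg2.atTop_add hσ0)
      filter_upwards [hmem] with σ hσ
      field_simp
    have hΦ1 := stdNormalCDF_tendsto_atTop.comp harg1
    have hΦ2 := stdNormalCDF_tendsto_atTop.comp harg2
    have hfinal := (hAfac.mul hΦ1).sub ((tendsto_const_nhds (x := B)).mul hΦ2)
    rw [max_eq_left (sub_nonneg.mpr hAB.le)]
    simpa using hfinal
end
end

section
/- Let x, K > 0, r ≥ 0, T > 0. The function σ ↦ H(x, -σ²/2, σ²) = x Φ((log(x/K)+rT+σ²/2)/σ) - K e^{-rT} Φ((log(x/K)+rT-σ²/2)/σ) is nondecreasing in σ on (0, ∞). -/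
open MeasureTheory ProbabilityTheory Filter Real Set

noncomputable section

variable {Ω : Type*}

private lemma integrable_gauss' : MeasureTheory.Integrable (fun u : ℝ => Real.exp (-u ^ 2 / 2)) := by
  have h := integrable_exp_neg_mul_sq (b := (1:ℝ)/2) (by norm_num)
  have he : ∀ u : ℝ, -u ^ 2 / 2 = -(1/2 * u ^ 2) := by intro u; ring
  simpa [he] using h

private lemma hasDerivAt_stdNormalCDF (y : ℝ) :
    HasDerivAt stdNormalCDF ((Real.sqrt (2 * Real.pi))⁻¹ * Real.exp (-y ^ 2 / 2)) y := by
  have hint := integrable_gauss'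
  have hcont : Continuous fun u : ℝ => Real.exp (-u ^ 2 / 2) := by continuity
  have hsplit : ∀ z : ℝ, (∫ u in Set.Iic z, Real.exp (-u ^ 2 / 2)) =
      (∫ u in Set.Iic (0:ℝ), Real.exp (-u ^ 2 / 2)) + ∫ u in (0:ℝ)..z, Real.exp (-u ^ 2 / 2) := by
    intro z
    rw [← intervalIntegral.integral_Iic_sub_Iic hint.integrableOn hint.integrableOn]
    ring
  have hd : HasDerivAt (fun z : ℝ => ∫ u in (0:ℝ)..z, Real.exp (-u ^ 2 / 2))
      (Real.exp (-y ^ 2 / 2)) y :=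
    intervalIntegral.integral_hasDerivAt_right (hcont.intervalIntegrable 0 y)
      (hcont.aestronglyMeasurable.stronglyMeasurableAtFilter) hcont.continuousAt
  have := ((hd.const_add (∫ u in Set.Iic (0:ℝ), Real.exp (-u ^ 2 / 2))).const_mul
      ((Real.sqrt (2 * Real.pi))⁻¹))
  refine HasDerivAt.congr_of_eventuallyEq this (Filter.Eventually.of_forall fun z => ?_)
  show stdNormalCDF z = _
  unfold stdNormalCDF
  rw [hsplit z]

/-- `σ ↦ H(x, -σ²/2, σ²)` is nondecreasing on `(0, ∞)`. -/
theorem H_monotone_in_volatility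
    (x K r T : ℝ) (hx : 0 < x) (hK : 0 < K) (hr : 0 ≤ r) (hT : 0 < T) :
    MonotoneOn (fun σ : ℝ =>
        x * stdNormalCDF ((Real.log (x / K) + r * T + σ ^ 2 / 2) / σ)
          - K * Real.exp (-(r * T))
            * stdNormalCDF ((Real.log (x / K) + r * T - σ ^ 2 / 2) / σ))
      (Set.Ioi 0) := by
  set L : ℝ := Real.log (x / K) + r * T with hLdef
  set c : ℝ := (Real.sqrt (2 * Real.pi))⁻¹ with hc
  have key : ∀ σ ∈ Set.Ioi (0:ℝ), HasDerivAt (fun σ : ℝ =>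
        x * stdNormalCDF ((Real.log (x / K) + r * T + σ ^ 2 / 2) / σ)
          - K * Real.exp (-(r * T))
            * stdNormalCDF ((Real.log (x / K) + r * T - σ ^ 2 / 2) / σ))
      (x * (c * Real.exp (-((L + σ ^ 2 / 2) / σ) ^ 2 / 2))) σ := by
    intro σ hσ
    have hσ0 : (σ : ℝ) ≠ 0 := ne_of_gt hσ
    have hd1 : HasDerivAt (fun σ : ℝ => (L + σ ^ 2 / 2) / σ) ((σ ^ 2 / 2 - L) / σ ^ 2) σ := by
      have h1 : HasDerivAt (fun σ : ℝ => L + σ ^ 2 / 2) σ σ := by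
        simpa using ((hasDerivAt_pow 2 σ).div_const 2).const_add L
      have h2 := h1.div (hasDerivAt_id σ) hσ0
      refine h2.congr_deriv ?_
      show (σ * σ - (L + σ ^ 2 / 2) * 1) / σ ^ 2 = _
      ring
    have hd2 : HasDerivAt (fun σ : ℝ => (L - σ ^ 2 / 2) / σ) ((-σ ^ 2 / 2 - L) / σ ^ 2) σ := by
      have h1 : HasDerivAt (fun σ : ℝ => L - σ ^ 2 / 2) (-σ) σ := by
        simpa using HasDerivAt.const_sub L ((hasDerivAt_pow 2 σ).div_const 2)
      have h2 := h1.div (hasDerivAt_id σ) hσ0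
      refine h2.congr_deriv ?_
      show (-σ * σ - (L - σ ^ 2 / 2) * 1) / σ ^ 2 = _
      ring
    have h1 : HasDerivAt (fun σ : ℝ => stdNormalCDF ((L + σ ^ 2 / 2) / σ))
        (c * Real.exp (-((L + σ ^ 2 / 2) / σ) ^ 2 / 2) * ((σ ^ 2 / 2 - L) / σ ^ 2)) σ :=
      (hasDerivAt_stdNormalCDF _).comp σ hd1
    have h2 : HasDerivAt (fun σ : ℝ => stdNormalCDF ((L - σ ^ 2 / 2) / σ))
        (c * Real.exp (-((L - σ ^ 2 / 2) / σ) ^ 2 / 2) * ((-σ ^ 2 / 2 - L) / σ ^ 2)) σ :=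
      (hasDerivAt_stdNormalCDF _).comp σ hd2
    have h1 := h1.const_mul x
    have h2 := h2.const_mul (K * Real.exp (-(r * T)))
    have hfull := h1.sub h2
    have hid : K * Real.exp (-(r * T)) * Real.exp (-((L - σ ^ 2 / 2) / σ) ^ 2 / 2)
        = x * Real.exp (-((L + σ ^ 2 / 2) / σ) ^ 2 / 2) := by
      have hsq : -((L - σ ^ 2 / 2) / σ) ^ 2 / 2 = -((L + σ ^ 2 / 2) / σ) ^ 2 / 2 + L := by
        field_simp
        ring
      rw [hsq, Real.exp_add, hLdef, Real.exp_add, Real.exp_log (div_pos hx hK), Real.exp_neg]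
      field_simp
    have hAB : (σ ^ 2 / 2 - L) / σ ^ 2 - (-σ ^ 2 / 2 - L) / σ ^ 2 = 1 := by
      field_simp
      ring
    refine hfull.congr_deriv (Eq.symm ?_)
    have hexp := hid
    set E1 : ℝ := Real.exp (-((L + σ ^ 2 / 2) / σ) ^ 2 / 2)
    set E2 : ℝ := Real.exp (-((L - σ ^ 2 / 2) / σ) ^ 2 / 2)
    linear_combination c * ((-σ ^ 2 / 2 - L) / σ ^ 2) * hexp - x * c * E1 * hAB
  have hdiff : DifferentiableOn ℝ (fun σ : ℝ =>
        x * stdNormalCDF ((Real.log (x / K) + r * T + σ ^ 2 / 2) / σ)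
          - K * Real.exp (-(r * T))
            * stdNormalCDF ((Real.log (x / K) + r * T - σ ^ 2 / 2) / σ)) (Set.Ioi 0) :=
    fun σ hσ => ((key σ hσ).differentiableAt).differentiableWithinAt
  apply monotoneOn_of_deriv_nonneg (convex_Ioi 0) hdiff.continuousOn
  · rw [interior_Ioi]; exact hdiff
  · intro σ hσ
    rw [interior_Ioi] at hσ
    rw [(key σ hσ).deriv]
    have hc0 : (0:ℝ) ≤ c := by positivity
    positivity
end
end
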